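/- arXiv:1606.08116 — 4 statements merged into one kernel-verified Lean document; each statement's English description precedes it below -/
import Mathlib

section
/- For all LTL formulas φ₁ and φ₂ and every infinite word ρ: ρ ⊨ FG(φ₁ ∨ Fφ₂) if and only if ρ ⊨ FGφ₁ ∨ GFφ₂. -/
/-- Syntax of LTL formulas (with general negation, next, until, weak until). -/
inductive LTL (AP : Type) : Type where
  | tru : LTL AP
  | atom : AP → LTL AP
  | neg : LTL AP → LTL AP
  | conj : LTL AP → LTL AP → LTL AP
  | disj : LTL AP → LTL AP → LTL AP
  | next : LTL AP → LTL AP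
  | untl : LTL AP → LTL AP → LTL AP
  | wuntl : LTL AP → LTL AP → LTL AP

/-- Infinite words over the alphabet `2^AP`. -/
def Word (AP : Type) := ℕ → Set AP

/-- The suffix `ρ[i..]` of an infinite word. -/
def Word.suffix {AP : Type} (ρ : Word AP) (i : ℕ) : Word AP := fun n => ρ (n + i)

/-- Satisfaction of an LTL formula on an infinite word. -/
def sat {AP : Type} : Word AP → LTL AP → Prop
  | _, .tru => True
  | ρ, .atom a => a ∈ ρ 0
  | ρ, .neg φ => ¬ sat ρ φ
  | ρ, .conj φ ψ => sat ρ φ ∧ sat ρ ψ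
  | ρ, .disj φ ψ => sat ρ φ ∨ sat ρ ψ
  | ρ, .next φ => sat (ρ.suffix 1) φ
  | ρ, .untl φ ψ => ∃ i, sat (ρ.suffix i) ψ ∧ ∀ j < i, sat (ρ.suffix j) φ
  | ρ, .wuntl φ ψ =>
      (∀ i, sat (ρ.suffix i) φ) ∨ ∃ i, sat (ρ.suffix i) ψ ∧ ∀ j < i, sat (ρ.suffix j) φ

/-- Eventually: `F φ = ⊤ U φ`. -/
def LTL.ev {AP : Type} (φ : LTL AP) : LTL AP := LTL.untl LTL.tru φ

/-- Always: `G φ = φ W ⊥`. -/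
def LTL.alw {AP : Type} (φ : LTL AP) : LTL AP := LTL.wuntl φ (LTL.neg LTL.tru)

/-- Semantic equivalence of formulas on all infinite words. -/
def LTLequiv {AP : Type} (φ ψ : LTL AP) : Prop := ∀ ρ : Word AP, sat ρ φ ↔ sat ρ ψ

/-- Prepend a finite word `l` to an infinite word `ρ`. -/
def prepend {AP : Type} (l : List (Set AP)) (ρ : Word AP) : Word AP :=
  fun i => if h : i < l.length then l.get ⟨i, h⟩ else ρ (i - l.length)

/-- A fairness formula: satisfaction is closed under suffixes and under prepending
arbitrary finite prefixes. -/
def Fairness {AP : Type} (φ : LTL AP) : Prop :=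
  (∀ ρ : Word AP, sat ρ φ → ∀ i, sat (ρ.suffix i) φ) ∧
  (∀ ρ : Word AP, sat ρ φ → ∀ ρ₁ : List (Set AP), sat (prepend ρ₁ ρ) φ)

/-- The cyclic (periodic) word `σ^ω` obtained by repeating a nonempty finite word `σ`. -/
def cyc {AP : Type} (σ : List (Set AP)) (h : σ ≠ []) : Word AP :=
  fun i => σ.get ⟨i % σ.length, Nat.mod_lt i (List.length_pos_iff.mpr h)⟩

/-- Propositional formulas: atoms and negated atoms combined with `∧`, `∨`. -/
inductive PropForm (AP : Type) : Type where
  | atom : AP → PropForm AP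
  | natom : AP → PropForm AP
  | conj : PropForm AP → PropForm AP → PropForm AP
  | disj : PropForm AP → PropForm AP → PropForm AP

/-- Satisfaction of a propositional formula at a single letter `A ∈ 2^AP`. -/
def psat {AP : Type} (A : Set AP) : PropForm AP → Prop
  | .atom a => a ∈ A
  | .natom a => a ∉ A
  | .conj l₁ l₂ => psat A l₁ ∧ psat A l₂
  | .disj l₁ l₂ => psat A l₁ ∨ psat A l₂

/-- Embedding of propositional formulas into LTL. -/
def PropForm.toLTL {AP : Type} : PropForm AP → LTL AP
  | .atom a => .atom a
  | .natom a => .neg (.atom a)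
  | .conj l₁ l₂ => .conj l₁.toLTL l₂.toLTL
  | .disj l₁ l₂ => .disj l₁.toLTL l₂.toLTL

/-- A finite Kripke structure with a total transition relation. -/
structure Kripke (AP : Type) where
  S : Type
  [fin : Fintype S]
  init : S
  T : S → S → Prop
  total : ∀ s, ∃ t, T s t
  L : S → Set AP

/-- `π` is an infinite path of `K` starting at the initial state. -/
def Kripke.IsPath {AP : Type} (K : Kripke AP) (π : ℕ → K.S) : Prop :=
  π 0 = K.init ∧ ∀ i, K.T (π i) (π (i + 1))

/-- There is a nonempty finite path from `s` to `t` staying inside `B`. -/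
def Kripke.ConnIn {AP : Type} (K : Kripke AP) (B : Set K.S) (s t : K.S) : Prop :=
  ∃ n > 0, ∃ f : ℕ → K.S, f 0 = s ∧ f n = t ∧
    (∀ i < n, K.T (f i) (f (i + 1))) ∧ (∀ i ≤ n, f i ∈ B)

/-- `B` is a nontrivial strongly connected set of states. -/
def Kripke.IsSCSet {AP : Type} (K : Kripke AP) (B : Set K.S) : Prop :=
  ∀ s ∈ B, ∀ t ∈ B, K.ConnIn B s t

/-- Some state of `B` is reachable from the initial state. -/
def Kripke.Reachable {AP : Type} (K : Kripke AP) (B : Set K.S) : Prop :=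
  ∃ s ∈ B, ∃ n, ∃ f : ℕ → K.S, f 0 = K.init ∧ f n = s ∧ ∀ i < n, K.T (f i) (f (i + 1))

/-- The periodic word `({a}{}{a,c})^ω`. -/
def word1 {AP : Type} (a c : AP) : Word AP :=
  fun i => if i % 3 = 0 then {a} else if i % 3 = 1 then ∅ else {a, c}

/-- The periodic word `({a}{a,c}{})^ω`. -/
def word2 {AP : Type} (a c : AP) : Word AP :=
  fun i => if i % 3 = 0 then {a} else if i % 3 = 1 then {a, c} else ∅

lemma suffix_suffix {AP : Type} (ρ : Word AP) (i j : ℕ) :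
    (ρ.suffix i).suffix j = ρ.suffix (j + i) := by
  funext n; simp [Word.suffix, Nat.add_assoc]

/-- ρ ⊨ FG(φ₁ ∨ Fφ₂) iff ρ ⊨ FGφ₁ ∨ GFφ₂. -/
theorem FG_disj_F {AP : Type} (ρ : Word AP) (φ₁ φ₂ : LTL AP) :
    sat ρ ((φ₁.disj φ₂.ev).alw.ev) ↔ sat ρ (LTL.disj φ₁.alw.ev φ₂.ev.alw) := by
  simp only [sat, LTL.ev, LTL.alw, suffix_suffix, true_and, not_true, false_and,
    exists_false, or_false, implies_true, and_true, forall_const]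
  constructor
  · rintro ⟨i, h⟩
    by_cases hg : ∀ n, ∃ k, sat (ρ.suffix (k + n)) φ₂
    · exact Or.inr hg
    · push_neg at hg
      obtain ⟨N, hN⟩ := hg
      refine Or.inl ⟨N + i, fun j => ?_⟩
      rcases h (j + N) with h1 | ⟨k, hk⟩
      · have : j + N + i = j + (N + i) := by ring
        rwa [this] at h1
      · exact absurd hk (by
          have : k + (j + N + i) = (k + (j + i)) + N := by ring
          rw [this]; exact hN _)
  · rintro (⟨i, h⟩ | h)
    · exact ⟨i, fun j => Or.inl (h j)⟩
    · refine ⟨0, fun j => Or.inr ?_⟩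
      obtain ⟨k, hk⟩ := h (j + 0)
      exact ⟨k, hk⟩
end

section
/- For every nonempty finite word σ over 2^AP and all LTL formulas φ₁, φ₂: σ^ω ⊨ F(φ₁ ∧ Gφ₂) if and only if σ^ω ⊨ Fφ₁ ∧ Gφ₂. -/

lemma cyc_suffix_add_mul {AP : Type} (σ : List (Set AP)) (h : σ ≠ []) (k m : ℕ) :
    (cyc σ h).suffix (k + m * σ.length) = (cyc σ h).suffix k := by
  funext n
  simp only [Word.suffix, cyc]
  congr 1
  apply Fin.ext
  simp [← Nat.add_assoc, Nat.add_mul_mod_self_right]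

lemma sat_alw_iff {AP : Type} (ρ : Word AP) (φ : LTL AP) :
    sat ρ φ.alw ↔ ∀ i, sat (ρ.suffix i) φ := by
  constructor
  · rintro (h | ⟨i, hi, _⟩)
    · exact h
    · exact absurd trivial hi
  · exact Or.inl

/-- On cyclic words: σ^ω ⊨ F(φ₁ ∧ Gφ₂) iff σ^ω ⊨ Fφ₁ ∧ Gφ₂. -/
theorem F_conj_G_c {AP : Type} (σ : List (Set AP)) (h : σ ≠ []) (φ₁ φ₂ : LTL AP) :
    sat (cyc σ h) ((φ₁.conj φ₂.alw).ev) ↔ sat (cyc σ h) (LTL.conj φ₁.ev φ₂.alw) := by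
  have L := σ.length
  constructor
  · rintro ⟨i, ⟨h1, h2⟩, -⟩
    rw [sat_alw_iff] at h2
    refine ⟨⟨i, h1, fun _ _ => trivial⟩, ?_⟩
    rw [sat_alw_iff]
    intro k
    have : (cyc σ h).suffix k = (cyc σ h).suffix ((k + i * σ.length) - i + i) := by
      have hlen : 1 ≤ σ.length := List.length_pos_iff.mpr h
      have hik : i ≤ k + i * σ.length :=
        le_trans (by nlinarith) (Nat.le_add_left _ _)
      rw [Nat.sub_add_cancel hik, ← cyc_suffix_add_mul σ h k i]
    rw [this, ← suffix_suffix]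
    exact h2 _
  · rintro ⟨⟨i, h1, -⟩, h2⟩
    rw [sat_alw_iff] at h2
    refine ⟨i, ⟨h1, ?_⟩, fun _ _ => trivial⟩
    rw [sat_alw_iff]
    intro j
    rw [suffix_suffix]
    exact h2 _
end

section
/- For every nonempty finite word σ over 2^AP and all LTL formulas φ₁, φ₂, φ₃: σ^ω ⊨ φ₁ U (φ₂ ∧ Fφ₃) if and only if σ^ω ⊨ (φ₁ U φ₂) ∧ Fφ₃. -/
lemma cyc_suffix_mod {AP : Type} (σ : List (Set AP)) (h : σ ≠ []) (m n : ℕ)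
    (hmn : m % σ.length = n % σ.length) :
    (cyc σ h).suffix m = (cyc σ h).suffix n := by
  funext j
  simp only [Word.suffix, cyc]
  congr 1
  ext
  simp only
  rw [Nat.add_mod j m, Nat.add_mod j n, hmn]

/-- On cyclic words: σ^ω ⊨ φ₁ U (φ₂ ∧ Fφ₃) iff σ^ω ⊨ (φ₁ U φ₂) ∧ Fφ₃. -/
theorem until_conj_F_c {AP : Type} (σ : List (Set AP)) (h : σ ≠ [])
    (φ₁ φ₂ φ₃ : LTL AP) :
    sat (cyc σ h) (φ₁.untl (φ₂.conj φ₃.ev)) ↔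
      sat (cyc σ h) (LTL.conj (φ₁.untl φ₂) φ₃.ev) := by
  constructor
  · rintro ⟨i, ⟨h2, k, h3, -⟩, h1⟩
    exact ⟨⟨i, h2, h1⟩, k + i, by
      have : ((cyc σ h).suffix i).suffix k = (cyc σ h).suffix (k + i) := by
        funext j; simp [Word.suffix, Nat.add_assoc]
      rw [← this]; exact ⟨h3, fun _ _ => trivial⟩⟩
  · rintro ⟨⟨i, h2, h1⟩, k, h3, -⟩
    have L := σ.length
    have hL : 0 < σ.length := List.length_pos_iff.mpr h
    refine ⟨i, ⟨h2, k + i * σ.length - i, ?_, fun _ _ => trivial⟩, h1⟩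
    have hle : i ≤ i * σ.length := Nat.le_mul_of_pos_right i hL
    have heq : (k + i * σ.length - i) + i = k + i * σ.length := by omega
    have : ((cyc σ h).suffix i).suffix (k + i * σ.length - i)
        = (cyc σ h).suffix (k + i * σ.length) := by
      funext j; simp only [Word.suffix]; rw [Nat.add_assoc, heq]
    rw [this, cyc_suffix_mod σ h (k + i * σ.length) k (by simp [Nat.add_mul_mod_self_right])]
    exact h3
end

section
/- In a finite Kripke structure K, for propositional formulas l, l₁, …, l_m, there exists an infinite path π from the initial state satisfying FG l ∧ ⋀_{j=1}^{m} GF l_j if and only if there exists a reachable nontrivial strongly connected set B of states such that every state s ∈ B satisfies l, and for each j ∈ {1,…,m} there exists a state s ∈ B with s ⊨ l_j. -/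
section AuxLemmas

variable {AP : Type}

lemma aux_sat_toLTL (p : PropForm AP) (ρ : Word AP) :
    sat ρ p.toLTL ↔ psat (ρ 0) p := by
  induction p with
  | atom a => exact Iff.rfl
  | natom a => exact Iff.rfl
  | conj p q hp hq => exact and_congr hp hq
  | disj p q hp hq => exact or_congr hp hq

lemma aux_sat_alw (φ : LTL AP) (ρ : Word AP) :
    sat ρ φ.alw ↔ ∀ i, sat (ρ.suffix i) φ := by
  constructor
  · rintro (h | ⟨i, hi, _⟩)
    · exact h
    · exact absurd trivial hi
  · exact Or.inl

lemma aux_sat_ev (φ : LTL AP) (ρ : Word AP) :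
    sat ρ φ.ev ↔ ∃ i, sat (ρ.suffix i) φ := by
  constructor
  · rintro ⟨i, hi, _⟩; exact ⟨i, hi⟩
  · rintro ⟨i, hi⟩; exact ⟨i, hi, fun _ _ => trivial⟩

lemma aux_sat_FG (p : PropForm AP) (ρ : Word AP) :
    sat ρ (p.toLTL.alw.ev) ↔ ∃ N, ∀ i, psat (ρ (i + N)) p := by
  rw [aux_sat_ev]
  refine exists_congr fun N => ?_
  rw [aux_sat_alw]
  refine forall_congr' fun i => ?_
  rw [aux_sat_toLTL]
  show psat (ρ (0 + i + N)) p ↔ _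
  rw [Nat.zero_add]

lemma aux_sat_GF (p : PropForm AP) (ρ : Word AP) :
    sat ρ (p.toLTL.ev.alw) ↔ ∀ i, ∃ k, psat (ρ (k + i)) p := by
  rw [aux_sat_alw]
  refine forall_congr' fun i => ?_
  rw [aux_sat_ev]
  refine exists_congr fun k => ?_
  rw [aux_sat_toLTL]
  show psat (ρ (0 + k + i)) p ↔ _
  rw [Nat.zero_add]

/-- Concatenating a `ConnIn` path with a path visiting a list of states. -/
lemma aux_concat (K : Kripke AP) (B : Set K.S) (s t u : K.S) (ts : List K.S)
    (h1 : K.ConnIn B s t)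
    (h2 : ∃ n > 0, ∃ f : ℕ → K.S, f 0 = t ∧ f n = u ∧
      (∀ i < n, K.T (f i) (f (i + 1))) ∧ (∀ i ≤ n, f i ∈ B) ∧
      ∀ v ∈ ts, ∃ i ≤ n, f i = v) :
    ∃ n > 0, ∃ f : ℕ → K.S, f 0 = s ∧ f n = u ∧
      (∀ i < n, K.T (f i) (f (i + 1))) ∧ (∀ i ≤ n, f i ∈ B) ∧
      ∀ v ∈ ts, ∃ i ≤ n, f i = v := by
  obtain ⟨n1, hn1, f, hf0, hf1, hfT, hfB⟩ := h1
  obtain ⟨n2, hn2, g, hg0, hg1, hgT, hgB, hgV⟩ := h2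
  refine ⟨n1 + n2, by omega, fun i => if i < n1 then f i else g (i - n1), ?_, ?_, ?_, ?_, ?_⟩
  · simp only [hn1, if_pos hn1]; exact hf0
  · have h : ¬ (n1 + n2 < n1) := by omega
    show (if n1 + n2 < n1 then f (n1 + n2) else g (n1 + n2 - n1)) = u
    rw [if_neg h]
    have h2 : n1 + n2 - n1 = n2 := by omega
    rw [h2, hg1]
  · intro i hi
    by_cases h1 : i + 1 < n1
    · have h0 : i < n1 := by omega
      simp only [if_pos h0, if_pos h1]
      exact hfT i h0
    · by_cases h0 : i < n1
      · have he : i + 1 = n1 := by omega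
        simp only [if_pos h0, if_neg h1]
        have : i + 1 - n1 = 0 := by omega
        rw [this, hg0, ← hf1, ← he]
        exact hfT i h0
      · simp only [if_neg h0, if_neg h1]
        have he : i + 1 - n1 = (i - n1) + 1 := by omega
        rw [he]
        exact hgT (i - n1) (by omega)
  · intro i hi
    by_cases h0 : i < n1
    · simp only [if_pos h0]; exact hfB i (le_of_lt h0)
    · simp only [if_neg h0]; exact hgB (i - n1) (by omega)
  · intro v hv
    obtain ⟨i, hi, hiv⟩ := hgV v hv
    refine ⟨n1 + i, by omega, ?_⟩
    have h0 : ¬ (n1 + i < n1) := by omega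
    simp only [if_neg h0]
    have : n1 + i - n1 = i := by omega
    rw [this]; exact hiv

lemma aux_path_visits (K : Kripke AP) (B : Set K.S) (hSC : K.IsSCSet B)
    (ts : List K.S) (hts : ∀ u ∈ ts, u ∈ B) (s : K.S) (hs : s ∈ B)
    (t : K.S) (ht : t ∈ B) :
    ∃ n > 0, ∃ f : ℕ → K.S, f 0 = s ∧ f n = t ∧
      (∀ i < n, K.T (f i) (f (i + 1))) ∧ (∀ i ≤ n, f i ∈ B) ∧
      ∀ v ∈ ts, ∃ i ≤ n, f i = v := by
  induction ts generalizing s with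
  | nil =>
    obtain ⟨n, hn, f, h0, h1, hT, hB⟩ := hSC s hs t ht
    exact ⟨n, hn, f, h0, h1, hT, hB, by simp⟩
  | cons u ts ih =>
    have hu : u ∈ B := hts u (by simp)
    have hts' : ∀ v ∈ ts, v ∈ B := fun v hv => hts v (by simp [hv])
    obtain ⟨n, hn, f, h0, h1, hT, hB, hV⟩ := ih hts' u hu
    refine aux_concat K B s u t (u :: ts) (hSC s hs u hu) ⟨n, hn, f, h0, h1, hT, hB, ?_⟩
    intro v hv
    rcases List.mem_cons.mp hv with h | h
    · exact ⟨0, by omega, by rw [h0, h]⟩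
    · exact hV v h

end AuxLemmas

/-- There is an infinite path from the initial state satisfying
`FG l ∧ ⋀_j GF l_j` iff there is a reachable nontrivial strongly connected set `B`
all of whose states satisfy `l` and, for each `j`, some state of `B` satisfies `l_j`. -/
theorem exists_path_iff_accepting_SCC {AP : Type} (K : Kripke AP)
    (l : PropForm AP) (m : ℕ) (lj : Fin m → PropForm AP) :
    (∃ π : ℕ → K.S, K.IsPath π ∧
        sat (fun i => K.L (π i)) (l.toLTL.alw.ev) ∧
        ∀ j : Fin m, sat (fun i => K.L (π i)) ((lj j).toLTL.ev.alw)) ↔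
    (∃ B : Set K.S, K.Reachable B ∧ K.IsSCSet B ∧
        (∀ s ∈ B, psat (K.L s) l) ∧
        ∀ j : Fin m, ∃ s ∈ B, psat (K.L s) (lj j)) := by
  haveI := K.fin
  constructor
  · rintro ⟨π, ⟨hπ0, hπT⟩, hFG, hGF⟩
    replace hFG := (aux_sat_FG l _).mp hFG
    obtain ⟨N, hN⟩ := hFG
    have hGF' : ∀ j : Fin m, ∀ i, ∃ k, psat (K.L (π (k + i))) (lj j) :=
      fun j => (aux_sat_GF (lj j) _).mp (hGF j)
    set B : Set K.S := {s | ∀ n, ∃ k ≥ n, π k = s} with hB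
    have hbound : ∀ s : K.S, ∃ n, s ∈ B ∨ ∀ k ≥ n, π k ≠ s := by
      intro s
      by_cases h : s ∈ B
      · exact ⟨0, Or.inl h⟩
      · simp only [hB, Set.mem_setOf_eq] at h
        push_neg at h
        obtain ⟨n, hn⟩ := h
        exact ⟨n, Or.inr hn⟩
    choose nf hnf using hbound
    set M := max ((Finset.univ : Finset K.S).sup nf) N with hM
    have hMem : ∀ i, M ≤ i → π i ∈ B := by
      intro i hi
      rcases hnf (π i) with h | h
      · exact h
      · exact absurd rfl
          (h i (le_trans (le_trans (Finset.le_sup (Finset.mem_univ _)) (le_max_left _ _)) hi))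
    have hBsat : ∀ s ∈ B, psat (K.L s) l := by
      intro s hs
      obtain ⟨k, hk, hks⟩ := hs N
      have h := hN (k - N)
      rwa [(by omega : k - N + N = k), hks] at h
    refine ⟨B, ?_, ?_, hBsat, ?_⟩
    · exact ⟨π M, hMem M le_rfl, M, π, hπ0, rfl, fun i _ => hπT i⟩
    · intro s hs t ht
      obtain ⟨i, hiM, his⟩ := hs M
      obtain ⟨k, hk, hkt⟩ := ht (i + 1)
      refine ⟨k - i, by omega, fun q => π (q + i), by simp [his], ?_, ?_, ?_⟩
      · show π (k - i + i) = t
        rw [(by omega : k - i + i = k), hkt]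
      · intro q hq
        show K.T (π (q + i)) (π (q + 1 + i))
        rw [Nat.add_right_comm q 1 i]
        exact hπT (q + i)
      · intro q hq
        exact hMem (q + i) (by omega)
    · intro j
      obtain ⟨k, hk⟩ := hGF' j M
      exact ⟨π (k + M), hMem (k + M) (by omega), hk⟩
  · rintro ⟨B, ⟨s, hsB, n0, f0, hf00, hf0n, hf0T⟩, hSC, hl, hlj⟩
    choose w hwB hwP using hlj
    obtain ⟨p, hp, g, hg0, hgp, hgT, hgB, hgV⟩ :=
      aux_path_visits K B hSC (List.ofFn w)
        (by
          intro u hu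
          obtain ⟨j, rfl⟩ := List.mem_ofFn.mp hu
          exact hwB j) s hsB s hsB
    have hgmod : ∀ i ≤ p, g (i % p) = g i := by
      intro i hi
      rcases lt_or_eq_of_le hi with h | h
      · rw [Nat.mod_eq_of_lt h]
      · subst h; rw [Nat.mod_self, hg0, hgp]
    set π : ℕ → K.S := fun i => if i < n0 then f0 i else g ((i - n0) % p) with hπ
    have h_lt : ∀ i, i < n0 → π i = f0 i := by
      intro i hi; simp only [hπ, if_pos hi]
    have h_ge : ∀ i, n0 ≤ i → π i = g ((i - n0) % p) := by
      intro i hi; simp only [hπ, if_neg (Nat.not_lt.mpr hi)]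
    refine ⟨π, ⟨?_, ?_⟩, ?_, ?_⟩
    · by_cases h : 0 < n0
      · rw [h_lt 0 h, hf00]
      · have hn0 : n0 = 0 := by omega
        rw [h_ge 0 (by omega), hn0, Nat.zero_sub, Nat.zero_mod, hg0]
        rw [hn0] at hf0n
        rw [← hf0n, hf00]
    · intro i
      by_cases h1 : i + 1 < n0
      · rw [h_lt i (by omega), h_lt (i + 1) h1]
        exact hf0T i (by omega)
      · by_cases h0 : i < n0
        · have he : i + 1 = n0 := by omega
          rw [h_lt i h0, h_ge (i + 1) (by omega), he, Nat.sub_self, Nat.zero_mod, hg0,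
            ← hf0n, ← he]
          exact hf0T i h0
        · have hii : n0 ≤ i := by omega
          rw [h_ge i hii, h_ge (i + 1) (by omega),
            (by omega : i + 1 - n0 = (i - n0) + 1)]
          set k := i - n0 with hk
          have hmm : (k % p + 1) % p = (k + 1) % p := Nat.mod_add_mod k p 1
          by_cases hcase : k % p + 1 = p
          · have h2 : (k + 1) % p = 0 := by
              rw [← hmm, hcase, Nat.mod_self]
            rw [h2, hg0, ← hgp]
            have h3 := hgT (k % p) (by omega)
            rwa [hcase] at h3
          · have hlt : k % p < p := Nat.mod_lt _ hp
            have h2 : (k + 1) % p = k % p + 1 := by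
              rw [← hmm, Nat.mod_eq_of_lt (by omega)]
            rw [h2]
            exact hgT (k % p) hlt
    · refine (aux_sat_FG l _).mpr ?_
      refine ⟨n0, fun i => ?_⟩
      have : π (i + n0) = g ((i + n0 - n0) % p) := h_ge (i + n0) (by omega)
      rw [this, (by omega : i + n0 - n0 = i)]
      exact hl _ (hgB (i % p) (le_of_lt (Nat.mod_lt _ hp)))
    · intro j
      refine (aux_sat_GF (lj j) _).mpr ?_
      intro i
      obtain ⟨iw, hiwle, hiww⟩ := hgV (w j) (List.mem_ofFn.mpr ⟨j, rfl⟩)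
      have hq : i ≤ n0 + iw + p * (i + 1) := by nlinarith
      refine ⟨n0 + iw + p * (i + 1) - i, ?_⟩
      rw [(by omega : n0 + iw + p * (i + 1) - i + i = n0 + iw + p * (i + 1))]
      have h1 : π (n0 + iw + p * (i + 1)) = g ((n0 + iw + p * (i + 1) - n0) % p) :=
        h_ge _ (by omega)
      rw [h1, (by omega : n0 + iw + p * (i + 1) - n0 = iw + p * (i + 1)),
        Nat.add_mul_mod_self_left, hgmod iw hiwle, hiww]
      exact hwP j
end
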